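/- (Pointwise estimate on the interaction nonlinearity.) Let σ > 0. There exists a constant C > 0, depending only on σ, such that for all complex numbers z₁, z₂, z₃: | |z₁+z₂+z₃|^σ (z₁+z₂+z₃) − |z₁|^σ z₁ − |z₂|^σ z₂ | ≤ C ( |z₂|^σ |z₁| + |z₁|^σ |z₂| + |z₁|^σ |z₃| + |z₂|^σ |z₃| + |z₃|^{σ+1} ). -/

import Mathlib

open Real

/-- Key real inequality: Lipschitz-type estimate for `x ↦ x^σ` weighted by `y`. -/
lemma rpow_diff_mul_le (σ : ℝ) (hσ : 0 < σ) :
    ∃ K : ℝ, 0 < K ∧ ∀ x y d : ℝ, 0 ≤ x → 0 ≤ y → 0 ≤ d → |x - y| ≤ d →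
      |x ^ σ - y ^ σ| * y ≤ K * (y ^ σ * d + d ^ (σ + 1)) := by
  refine ⟨2 * 3 ^ σ + σ * ((2:ℝ) ^ (1 - σ) + 2 ^ (σ - 1)) + 1, by positivity, ?_⟩
  intro x y d hx hy hd hxy
  by_cases hcase : y ≤ 2 * d
  · -- small y: bound crudely
    have h1 : |x ^ σ - y ^ σ| ≤ (y + d) ^ σ := by
      have hxd : x ^ σ ≤ (y + d) ^ σ := by
        apply rpow_le_rpow hx _ hσ.le
        have := abs_sub_le_iff.mp hxy
        linarith [this.1]
      have hyd : y ^ σ ≤ (y + d) ^ σ := rpow_le_rpow hy (by linarith) hσ.le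
      have hx0 : 0 ≤ x ^ σ := rpow_nonneg hx σ
      have hy0 : 0 ≤ y ^ σ := rpow_nonneg hy σ
      rw [abs_sub_le_iff]; constructor <;> linarith
    have h2 : (y + d) ^ σ ≤ (3 * d) ^ σ := rpow_le_rpow (by linarith) (by linarith) hσ.le
    have h3 : (3 * d) ^ σ = 3 ^ σ * d ^ σ := mul_rpow (by norm_num) hd
    have h4 : |x ^ σ - y ^ σ| * y ≤ 3 ^ σ * d ^ σ * (2 * d) := by
      apply mul_le_mul _ hcase hy (by positivity)
      calc |x ^ σ - y ^ σ| ≤ (y + d) ^ σ := h1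
        _ ≤ 3 ^ σ * d ^ σ := by rw [← h3]; exact h2
    have h5 : d ^ σ * d = d ^ (σ + 1) := by
      rw [rpow_add_one' hd (by linarith)]
    have h6 : (3:ℝ) ^ σ * d ^ σ * (2 * d) = 2 * 3 ^ σ * d ^ (σ + 1) := by
      rw [← h5]; ring
    nlinarith [rpow_nonneg hd (σ + 1), mul_nonneg (rpow_nonneg hy σ) hd,
      mul_nonneg (rpow_nonneg (by norm_num : (0:ℝ) ≤ 3) σ) (mul_nonneg (rpow_nonneg hy σ) hd),
      mul_nonneg (rpow_nonneg (by norm_num : (0:ℝ) ≤ 3) σ) (rpow_nonneg hd (σ + 1)),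
      mul_nonneg (mul_nonneg hσ.le (by positivity : (0:ℝ) ≤ (2:ℝ) ^ (1 - σ) + 2 ^ (σ - 1)))
        (rpow_nonneg hd (σ + 1)),
      mul_nonneg (mul_nonneg hσ.le (by positivity : (0:ℝ) ≤ (2:ℝ) ^ (1 - σ) + 2 ^ (σ - 1)))
        (mul_nonneg (rpow_nonneg hy σ) hd)]
  · -- y > 2d : mean value theorem on [y/2, 2y]
    push_neg at hcase
    have hy0 : 0 < y := by linarith
    set s : Set ℝ := Set.Icc (y / 2) (2 * y) with hs
    have hderiv : ∀ t ∈ s, HasDerivWithinAt (fun t : ℝ => t ^ σ) (σ * t ^ (σ - 1)) s t := by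
      intro t ht
      exact (hasDerivAt_rpow_const (Or.inl (by simp only [hs, Set.mem_Icc] at ht; nlinarith [ht.1]))).hasDerivWithinAt
    have hbound : ∀ t ∈ s, ‖σ * t ^ (σ - 1)‖ ≤ σ * ((2:ℝ) ^ (1 - σ) + 2 ^ (σ - 1)) * y ^ (σ - 1) := by
      intro t ht
      simp only [hs, Set.mem_Icc] at ht
      have ht0 : 0 < t := lt_of_lt_of_le (by linarith) ht.1
      have key : t ^ (σ - 1) ≤ (y / 2) ^ (σ - 1) + (2 * y) ^ (σ - 1) := by
        rcases le_total σ 1 with h1 | h1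
        · have := rpow_le_rpow_of_nonpos (by linarith : (0:ℝ) < y / 2) ht.1 (by linarith : σ - 1 ≤ 0)
          have h2 : 0 ≤ (2 * y) ^ (σ - 1) := rpow_nonneg (by linarith) _
          linarith
        · have := rpow_le_rpow ht0.le ht.2 (by linarith : 0 ≤ σ - 1)
          have h2 : 0 ≤ (y / 2) ^ (σ - 1) := rpow_nonneg (by linarith) _
          linarith
      have e1 : (y / 2) ^ (σ - 1) = (2:ℝ) ^ (1 - σ) * y ^ (σ - 1) := by
        rw [div_rpow hy0.le (by norm_num), show (1 - σ) = -(σ - 1) by ring,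
          rpow_neg (by norm_num)]
        ring
      have e2 : (2 * y) ^ (σ - 1) = (2:ℝ) ^ (σ - 1) * y ^ (σ - 1) := mul_rpow (by norm_num) hy0.le
      rw [Real.norm_eq_abs, abs_mul, abs_of_pos hσ, abs_of_pos (rpow_pos_of_pos ht0 _)]
      rw [e1, e2] at key
      have hyp : 0 ≤ y ^ (σ - 1) := rpow_nonneg hy0.le _
      nlinarith
    have hxs : x ∈ s := by
      simp only [hs, Set.mem_Icc]
      have := abs_sub_le_iff.mp hxy
      constructor <;> nlinarith [this.1, this.2]
    have hys : y ∈ s := by simp only [hs, Set.mem_Icc]; constructor <;> linarith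
    have mvt := (convex_Icc (y / 2) (2 * y)).norm_image_sub_le_of_norm_hasDerivWithin_le
      hderiv hbound hxs hys
    simp only [Real.norm_eq_abs] at mvt
    have hB : 0 ≤ σ * ((2:ℝ) ^ (1 - σ) + 2 ^ (σ - 1)) := by positivity
    have h1 : |x ^ σ - y ^ σ| ≤ σ * ((2:ℝ) ^ (1 - σ) + 2 ^ (σ - 1)) * y ^ (σ - 1) * d := by
      rw [abs_sub_comm]
      calc |y ^ σ - x ^ σ| ≤ σ * ((2:ℝ) ^ (1 - σ) + 2 ^ (σ - 1)) * y ^ (σ - 1) * |y - x| := mvt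
        _ ≤ _ := by
            apply mul_le_mul_of_nonneg_left _ (by positivity)
            rw [abs_sub_comm] at hxy; exact hxy
    have h2 : y ^ (σ - 1) * y = y ^ σ := by
      rw [← rpow_add_one hy0.ne' (σ - 1)]; ring_nf
    have h3 : |x ^ σ - y ^ σ| * y ≤ σ * ((2:ℝ) ^ (1 - σ) + 2 ^ (σ - 1)) * (y ^ σ * d) := by
      calc |x ^ σ - y ^ σ| * y ≤ σ * ((2:ℝ) ^ (1 - σ) + 2 ^ (σ - 1)) * y ^ (σ - 1) * d * y :=
            mul_le_mul_of_nonneg_right h1 hy0.le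
        _ = σ * ((2:ℝ) ^ (1 - σ) + 2 ^ (σ - 1)) * (y ^ (σ - 1) * y * d) := by ring
        _ = _ := by rw [h2]
    nlinarith [rpow_nonneg hd (σ + 1), mul_nonneg (rpow_nonneg hy σ) hd,
      rpow_pos_of_pos (by norm_num : (0:ℝ) < 3) σ]

/-- `(y+d)^σ ≤ 2^σ (y^σ + d^σ)`. -/
lemma add_rpow_le' (σ : ℝ) (hσ : 0 < σ) {y d : ℝ} (hy : 0 ≤ y) (hd : 0 ≤ d) :
    (y + d) ^ σ ≤ 2 ^ σ * (y ^ σ + d ^ σ) := by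
  rcases le_total y d with h | h
  · calc (y + d) ^ σ ≤ (2 * d) ^ σ := Real.rpow_le_rpow (by linarith) (by linarith) hσ.le
      _ = 2 ^ σ * d ^ σ := Real.mul_rpow (by norm_num) hd
      _ ≤ 2 ^ σ * (y ^ σ + d ^ σ) := by
          have := Real.rpow_nonneg hy σ
          nlinarith [Real.rpow_pos_of_pos (by norm_num : (0:ℝ) < 2) σ]
  · calc (y + d) ^ σ ≤ (2 * y) ^ σ := Real.rpow_le_rpow (by linarith) (by linarith) hσ.le
      _ = 2 ^ σ * y ^ σ := Real.mul_rpow (by norm_num) hy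
      _ ≤ 2 ^ σ * (y ^ σ + d ^ σ) := by
          have := Real.rpow_nonneg hd σ
          nlinarith [Real.rpow_pos_of_pos (by norm_num : (0:ℝ) < 2) σ]

/-- Step estimate: `‖F(a+b) - F(a)‖ ≤ K (‖a‖^σ ‖b‖ + ‖b‖^{σ+1})` for `F(z) = ‖z‖^σ z`. -/
lemma step_estimate (σ : ℝ) (hσ : 0 < σ) :
    ∃ K : ℝ, 0 < K ∧ ∀ a b : ℂ,
      ‖((‖a + b‖ ^ σ : ℝ) : ℂ) * (a + b) - ((‖a‖ ^ σ : ℝ) : ℂ) * a‖ ≤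
        K * (‖a‖ ^ σ * ‖b‖ + ‖b‖ ^ (σ + 1)) := by
  obtain ⟨K, hK, hA⟩ := rpow_diff_mul_le σ hσ
  refine ⟨K + 2 ^ σ, by positivity, ?_⟩
  intro a b
  set x := ‖a + b‖ with hxdef
  set y := ‖a‖ with hydef
  set d := ‖b‖ with hddef
  have hx : 0 ≤ x := norm_nonneg _
  have hy : 0 ≤ y := norm_nonneg _
  have hd : 0 ≤ d := norm_nonneg _
  have hxy : |x - y| ≤ d := by
    have := abs_norm_sub_norm_le (a + b) a
    simpa using this
  have decomp : ((x ^ σ : ℝ) : ℂ) * (a + b) - ((y ^ σ : ℝ) : ℂ) * a =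
      (((x ^ σ - y ^ σ : ℝ)) : ℂ) * a + ((x ^ σ : ℝ) : ℂ) * b := by
    push_cast; ring
  have hterm1 : ‖(((x ^ σ - y ^ σ : ℝ)) : ℂ) * a‖ = |x ^ σ - y ^ σ| * y := by
    rw [norm_mul, Complex.norm_real, Real.norm_eq_abs]
  have hterm2 : ‖((x ^ σ : ℝ) : ℂ) * b‖ = x ^ σ * d := by
    rw [norm_mul, Complex.norm_real, Real.norm_eq_abs,
      abs_of_nonneg (Real.rpow_nonneg hx σ)]
  have h1 : |x ^ σ - y ^ σ| * y ≤ K * (y ^ σ * d + d ^ (σ + 1)) := hA x y d hx hy hd hxy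
  have hxle : x ≤ y + d := norm_add_le a b
  have h2 : x ^ σ * d ≤ 2 ^ σ * (y ^ σ * d + d ^ (σ + 1)) := by
    have hx2 : x ^ σ ≤ 2 ^ σ * (y ^ σ + d ^ σ) :=
      le_trans (Real.rpow_le_rpow hx hxle hσ.le) (add_rpow_le' σ hσ hy hd)
    have h5 : d ^ σ * d = d ^ (σ + 1) := by rw [Real.rpow_add_one' hd (by linarith)]
    nlinarith [Real.rpow_nonneg hy σ, Real.rpow_nonneg hd σ,
      Real.rpow_pos_of_pos (by norm_num : (0:ℝ) < 2) σ]
  calc ‖((x ^ σ : ℝ) : ℂ) * (a + b) - ((y ^ σ : ℝ) : ℂ) * a‖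
      ≤ ‖(((x ^ σ - y ^ σ : ℝ)) : ℂ) * a‖ + ‖((x ^ σ : ℝ) : ℂ) * b‖ := by
        rw [decomp]; exact norm_add_le _ _
    _ = |x ^ σ - y ^ σ| * y + x ^ σ * d := by rw [hterm1, hterm2]
    _ ≤ K * (y ^ σ * d + d ^ (σ + 1)) + 2 ^ σ * (y ^ σ * d + d ^ (σ + 1)) := by linarith
    _ = (K + 2 ^ σ) * (y ^ σ * d + d ^ (σ + 1)) := by ring

/-- One-sided middle estimate when `‖b‖ ≤ ‖a‖`. -/
lemma middle_one_sided (σ : ℝ) (hσ : 0 < σ) (K : ℝ)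
    (hstep : ∀ a b : ℂ, ‖((‖a + b‖ ^ σ : ℝ) : ℂ) * (a + b) - ((‖a‖ ^ σ : ℝ) : ℂ) * a‖ ≤
        K * (‖a‖ ^ σ * ‖b‖ + ‖b‖ ^ (σ + 1)))
    (hK : 0 < K) {a b : ℂ} (hba : ‖b‖ ≤ ‖a‖) :
    ‖((‖a + b‖ ^ σ : ℝ) : ℂ) * (a + b) - ((‖a‖ ^ σ : ℝ) : ℂ) * a - ((‖b‖ ^ σ : ℝ) : ℂ) * b‖ ≤
      (2 * K + 1) * (‖a‖ ^ σ * ‖b‖) := by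
  have hFb : ‖((‖b‖ ^ σ : ℝ) : ℂ) * b‖ = ‖b‖ ^ σ * ‖b‖ := by
    rw [norm_mul, Complex.norm_real, Real.norm_eq_abs,
      abs_of_nonneg (Real.rpow_nonneg (norm_nonneg b) σ)]
  have hb1 : ‖b‖ ^ σ * ‖b‖ ≤ ‖a‖ ^ σ * ‖b‖ :=
    mul_le_mul_of_nonneg_right (Real.rpow_le_rpow (norm_nonneg b) hba hσ.le) (norm_nonneg b)
  have hb2 : ‖b‖ ^ (σ + 1) = ‖b‖ ^ σ * ‖b‖ := by
    rw [Real.rpow_add_one' (norm_nonneg b) (by linarith)]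
  calc ‖((‖a + b‖ ^ σ : ℝ) : ℂ) * (a + b) - ((‖a‖ ^ σ : ℝ) : ℂ) * a - ((‖b‖ ^ σ : ℝ) : ℂ) * b‖
      ≤ ‖((‖a + b‖ ^ σ : ℝ) : ℂ) * (a + b) - ((‖a‖ ^ σ : ℝ) : ℂ) * a‖ +
        ‖((‖b‖ ^ σ : ℝ) : ℂ) * b‖ := norm_sub_le _ _
    _ ≤ K * (‖a‖ ^ σ * ‖b‖ + ‖b‖ ^ (σ + 1)) + ‖b‖ ^ σ * ‖b‖ := by
        rw [hFb]; exact add_le_add (hstep a b) le_rfl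
    _ ≤ (2 * K + 1) * (‖a‖ ^ σ * ‖b‖) := by rw [hb2]; nlinarith

theorem interaction_nonlinearity_pointwise_estimate' (σ : ℝ) (hσ : 0 < σ) :
    ∃ C : ℝ, 0 < C ∧ ∀ z₁ z₂ z₃ : ℂ,
      ‖((‖z₁ + z₂ + z₃‖ ^ σ : ℝ) : ℂ) * (z₁ + z₂ + z₃) -
          ((‖z₁‖ ^ σ : ℝ) : ℂ) * z₁ - ((‖z₂‖ ^ σ : ℝ) : ℂ) * z₂‖ ≤
        C * (‖z₂‖ ^ σ * ‖z₁‖ + ‖z₁‖ ^ σ * ‖z₂‖ + ‖z₁‖ ^ σ * ‖z₃‖ + ‖z₂‖ ^ σ * ‖z₃‖ +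
          ‖z₃‖ ^ (σ + 1)) := by
  obtain ⟨K, hK, hstep⟩ := step_estimate σ hσ
  refine ⟨K * 2 ^ σ + K + (2 * K + 1) + 1, by positivity, ?_⟩
  intro z₁ z₂ z₃
  -- first piece: adding z₃
  have h1 : ‖((‖z₁ + z₂ + z₃‖ ^ σ : ℝ) : ℂ) * (z₁ + z₂ + z₃) -
      ((‖z₁ + z₂‖ ^ σ : ℝ) : ℂ) * (z₁ + z₂)‖ ≤
      K * (‖z₁ + z₂‖ ^ σ * ‖z₃‖ + ‖z₃‖ ^ (σ + 1)) := hstep (z₁ + z₂) z₃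
  have h12 : ‖z₁ + z₂‖ ^ σ ≤ 2 ^ σ * (‖z₁‖ ^ σ + ‖z₂‖ ^ σ) :=
    le_trans (Real.rpow_le_rpow (norm_nonneg _) (norm_add_le z₁ z₂) hσ.le)
      (add_rpow_le' σ hσ (norm_nonneg _) (norm_nonneg _))
  -- middle piece
  have hmid : ‖((‖z₁ + z₂‖ ^ σ : ℝ) : ℂ) * (z₁ + z₂) -
      ((‖z₁‖ ^ σ : ℝ) : ℂ) * z₁ - ((‖z₂‖ ^ σ : ℝ) : ℂ) * z₂‖ ≤
      (2 * K + 1) * (‖z₂‖ ^ σ * ‖z₁‖ + ‖z₁‖ ^ σ * ‖z₂‖) := by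
    rcases le_total ‖z₂‖ ‖z₁‖ with h | h
    · have := middle_one_sided σ hσ K hstep hK h
      have h0 : 0 ≤ ‖z₂‖ ^ σ * ‖z₁‖ :=
        mul_nonneg (Real.rpow_nonneg (norm_nonneg _) _) (norm_nonneg _)
      nlinarith
    · have := middle_one_sided σ hσ K hstep hK h
      rw [add_comm z₂ z₁] at this
      have hre : ‖((‖z₁ + z₂‖ ^ σ : ℝ) : ℂ) * (z₁ + z₂) -
          ((‖z₂‖ ^ σ : ℝ) : ℂ) * z₂ - ((‖z₁‖ ^ σ : ℝ) : ℂ) * z₁‖ =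
          ‖((‖z₁ + z₂‖ ^ σ : ℝ) : ℂ) * (z₁ + z₂) -
          ((‖z₁‖ ^ σ : ℝ) : ℂ) * z₁ - ((‖z₂‖ ^ σ : ℝ) : ℂ) * z₂‖ := by
        congr 1; ring
      rw [hre] at this
      have h0 : 0 ≤ ‖z₁‖ ^ σ * ‖z₂‖ :=
        mul_nonneg (Real.rpow_nonneg (norm_nonneg _) _) (norm_nonneg _)
      nlinarith
  -- combine
  have htri : ‖((‖z₁ + z₂ + z₃‖ ^ σ : ℝ) : ℂ) * (z₁ + z₂ + z₃) -
      ((‖z₁‖ ^ σ : ℝ) : ℂ) * z₁ - ((‖z₂‖ ^ σ : ℝ) : ℂ) * z₂‖ ≤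
      ‖((‖z₁ + z₂ + z₃‖ ^ σ : ℝ) : ℂ) * (z₁ + z₂ + z₃) -
        ((‖z₁ + z₂‖ ^ σ : ℝ) : ℂ) * (z₁ + z₂)‖ +
      ‖((‖z₁ + z₂‖ ^ σ : ℝ) : ℂ) * (z₁ + z₂) -
        ((‖z₁‖ ^ σ : ℝ) : ℂ) * z₁ - ((‖z₂‖ ^ σ : ℝ) : ℂ) * z₂‖ := by
    rw [show ((‖z₁ + z₂ + z₃‖ ^ σ : ℝ) : ℂ) * (z₁ + z₂ + z₃) -
        ((‖z₁‖ ^ σ : ℝ) : ℂ) * z₁ - ((‖z₂‖ ^ σ : ℝ) : ℂ) * z₂ =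
        (((‖z₁ + z₂ + z₃‖ ^ σ : ℝ) : ℂ) * (z₁ + z₂ + z₃) -
          ((‖z₁ + z₂‖ ^ σ : ℝ) : ℂ) * (z₁ + z₂)) +
        (((‖z₁ + z₂‖ ^ σ : ℝ) : ℂ) * (z₁ + z₂) -
          ((‖z₁‖ ^ σ : ℝ) : ℂ) * z₁ - ((‖z₂‖ ^ σ : ℝ) : ℂ) * z₂) by ring]
    exact norm_add_le _ _
  have T1 : 0 ≤ ‖z₂‖ ^ σ * ‖z₁‖ := by positivity
  have T2 : 0 ≤ ‖z₁‖ ^ σ * ‖z₂‖ := by positivity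
  have T3 : 0 ≤ ‖z₁‖ ^ σ * ‖z₃‖ := by positivity
  have T4 : 0 ≤ ‖z₂‖ ^ σ * ‖z₃‖ := by positivity
  have T5 : 0 ≤ ‖z₃‖ ^ (σ + 1) := by positivity
  have h1' : K * (‖z₁ + z₂‖ ^ σ * ‖z₃‖ + ‖z₃‖ ^ (σ + 1)) ≤
      K * 2 ^ σ * (‖z₁‖ ^ σ * ‖z₃‖ + ‖z₂‖ ^ σ * ‖z₃‖) + K * ‖z₃‖ ^ (σ + 1) := by
    have h3 : ‖z₁ + z₂‖ ^ σ * ‖z₃‖ ≤ 2 ^ σ * (‖z₁‖ ^ σ + ‖z₂‖ ^ σ) * ‖z₃‖ :=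
      mul_le_mul_of_nonneg_right h12 (norm_nonneg _)
    nlinarith
  have h2p : (0:ℝ) < 2 ^ σ := Real.rpow_pos_of_pos (by norm_num) σ
  nlinarith [mul_nonneg hK.le T1, mul_nonneg hK.le T2, mul_nonneg hK.le T3,
    mul_nonneg hK.le T4, mul_nonneg hK.le T5,
    mul_nonneg (mul_nonneg hK.le h2p.le) T1, mul_nonneg (mul_nonneg hK.le h2p.le) T2,
    mul_nonneg (mul_nonneg hK.le h2p.le) T5]


/-- Pointwise estimate on the interaction nonlinearity: for `σ > 0` there is
`C = C(σ) > 0` such that for all complex `z₁, z₂, z₃`,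
`| |z₁+z₂+z₃|^σ(z₁+z₂+z₃) − |z₁|^σ z₁ − |z₂|^σ z₂ |
  ≤ C (|z₂|^σ|z₁| + |z₁|^σ|z₂| + |z₁|^σ|z₃| + |z₂|^σ|z₃| + |z₃|^{σ+1})`. -/
theorem interaction_nonlinearity_pointwise_estimate (σ : ℝ) (hσ : 0 < σ) :
    ∃ C : ℝ, 0 < C ∧ ∀ z₁ z₂ z₃ : ℂ,
      ‖((‖z₁ + z₂ + z₃‖ ^ σ : ℝ) : ℂ) * (z₁ + z₂ + z₃) -
          ((‖z₁‖ ^ σ : ℝ) : ℂ) * z₁ - ((‖z₂‖ ^ σ : ℝ) : ℂ) * z₂‖ ≤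
        C * (‖z₂‖ ^ σ * ‖z₁‖ + ‖z₁‖ ^ σ * ‖z₂‖ + ‖z₁‖ ^ σ * ‖z₃‖ + ‖z₂‖ ^ σ * ‖z₃‖ +
          ‖z₃‖ ^ (σ + 1)) :=
  interaction_nonlinearity_pointwise_estimate' σ hσ
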